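/- Let A be a KV-algebra over a field F of characteristic zero, W a KV-bimodule of A, and ω : A × A → W a bilinear map. Equip the vector space W ⊕ A with the multiplication (w,a)(w',a') := (aw' + wa' + ω(a,a'), aa'). Then this multiplication is left-symmetric (i.e. makes W ⊕ A a KV-algebra) if and only if ω is a 2-cocycle: δω(a,b,c) = −aω(b,c) + ω(ab,c) + ω(b,ac) − ω(b,a)c + bω(a,c) − ω(ba,c) − ω(a,bc) + ω(a,b)c = 0 for all a,b,c ∈ A. -/
import Mathlib


/-- equip `W ⊕ A` with `(w,a)(w',a') := (aw' + wa' + ω(a,a'), aa')`.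
This multiplication is left-symmetric (makes `W ⊕ A` a KV-algebra) if and only if
`ω` is a KV 2-cocycle:
`−aω(b,c) + ω(ab,c) + ω(b,ac) − ω(b,a)c + bω(a,c) − ω(ba,c) − ω(a,bc) + ω(a,b)c = 0`. -/
theorem extension_kv_iff_two_cocycle
    {F : Type*} [Field F] [CharZero F]
    {A : Type*} [AddCommGroup A] [Module F A]
    {W : Type*} [AddCommGroup W] [Module F W]
    (mul : A →ₗ[F] A →ₗ[F] A)
    (hA : ∀ a b c : A, mul (mul a b) c - mul a (mul b c)
        = mul (mul b a) c - mul b (mul a c))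
    (l : A →ₗ[F] W →ₗ[F] W) (r : W →ₗ[F] A →ₗ[F] W)
    (hW1 : ∀ (a b : A) (w : W), l (mul a b) w - l a (l b w)
        = l (mul b a) w - l b (l a w))
    (hW2 : ∀ (a : A) (w : W) (b : A), r (l a w) b - l a (r w b)
        = r (r w a) b - r w (mul a b))
    (ω : A →ₗ[F] A →ₗ[F] W) :
    letI mulT : W × A → W × A → W × A :=
      fun x y => (l x.2 y.1 + r x.1 y.2 + ω x.2 y.2, mul x.2 y.2)
    (∀ x y z : W × A, mulT (mulT x y) z - mulT x (mulT y z)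
        = mulT (mulT y x) z - mulT y (mulT x z))
    ↔ (∀ a b c : A,
        - l a (ω b c) + ω (mul a b) c + ω b (mul a c) - r (ω b a) c
          + l b (ω a c) - ω (mul b a) c - ω a (mul b c) + r (ω a b) c = 0) := by
  constructor
  · intro h a b c
    have h1 := congrArg Prod.fst (h (0, a) (0, b) (0, c))
    simp only [Prod.fst_sub, map_zero, LinearMap.zero_apply, zero_add, add_zero] at h1
    linear_combination (norm := abel) h1
  · intro h x y z
    obtain ⟨x1, a⟩ := x
    obtain ⟨y1, b⟩ := y
    obtain ⟨z1, c⟩ := z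
    have e1 := hW1 a b z1
    have e2 := hW2 a y1 c
    have e3 := hW2 b x1 c
    have e4 := h a b c
    have e5 := hA a b c
    ext
    · simp only [Prod.fst_sub, map_add]
      linear_combination (norm := (simp only [map_add, LinearMap.add_apply, LinearMap.smul_apply]; abel)) e1 + e2 - e3 + e4
    · simpa using e5
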